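/- arXiv:1701.02512 — 2 statements merged into one kernel-verified Lean document; each statement's English description precedes it below -/
import Mathlib

section
/- Let $H$ be a real Hilbert space and $v_1,\ldots,v_p, w_1,\ldots,w_p \in H$. Suppose the Gram matrix of the combined family $\{v_1,\ldots,v_p,w_1,\ldots,w_p\}$ (after removing repeated vectors) is invertible whenever the two families differ. If $P_V$ and $P_W$ denote the orthogonal projections onto $V = \mathrm{span}\{v_i\}$ and $W = \mathrm{span}\{w_i\}$ respectively, and $P_V y = P_W y$ for some $y$ with $P_V y = \sum \beta_i v_i$, $\beta_i \neq 0$ for all $i$, then $\{v_1,\ldots,v_p\} = \{w_1,\ldots,w_p\}$ as sets. -/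
/-- Uniqueness of the optimal points: let `v₁,…,v_p` and `w₁,…,w_p` be two families of distinct
vectors in a real Hilbert space such that, whenever the families differ, the combined family
(as a set, i.e. with repetitions removed) is linearly independent (equivalently, its Gram
matrix is invertible). If the orthogonal projections of some `y` onto `V = span{vᵢ}` and
`W = span{wᵢ}` coincide, and `P_V y = ∑ βᵢ vᵢ` with all `βᵢ ≠ 0`, then the two families
coincide as sets. -/
theorem stmt13 {H : Type*} [NormedAddCommGroup H] [InnerProductSpace ℝ H] [CompleteSpace H]
    {p : ℕ} (v w : Fin p → H)
    (hv : Function.Injective v) (hw : Function.Injective w)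
    (hind : Set.range v ≠ Set.range w →
      LinearIndependent ℝ (fun x : (Set.range v ∪ Set.range w : Set H) => (x : H)))
    (V W : Submodule ℝ H)
    (hV : V = Submodule.span ℝ (Set.range v)) (hW : W = Submodule.span ℝ (Set.range w))
    (y PVy PWy : H)
    (hPVy : PVy ∈ V) (hPVyorth : ∀ u ∈ V, inner (𝕜 := ℝ) (y - PVy) u = 0)
    (hPWy : PWy ∈ W) (hPWyorth : ∀ u ∈ W, inner (𝕜 := ℝ) (y - PWy) u = 0)
    (heq : PVy = PWy)
    (β : Fin p → ℝ) (hrep : PVy = ∑ i, β i • v i) (hβ : ∀ i, β i ≠ 0) :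
    Set.range v = Set.range w := by
  classical
  by_contra hne
  have hli := hind hne
  -- PVy ∈ span (range w)
  have hmemW : PVy ∈ Submodule.span ℝ (Set.range w) := by
    rw [heq]; rw [hW] at hPWy; exact hPWy
  obtain ⟨γ, hγ⟩ := (Submodule.mem_span_range_iff_exists_fun ℝ).mp hmemW
  -- the linear relation as a Finsupp
  set l : H →₀ ℝ := (∑ i, Finsupp.single (v i) (β i)) - (∑ j, Finsupp.single (w j) (γ j)) with hl
  have hsupp : l ∈ Finsupp.supported ℝ ℝ (Set.range v ∪ Set.range w) := by
    refine (Finsupp.mem_supported' ℝ l).mpr (fun x hx => ?_)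
    simp only [Set.mem_union, Set.mem_range, not_or, not_exists] at hx
    have h1 : (∑ i, Finsupp.single (v i) (β i)) x = 0 := by
      rw [Finsupp.finset_sum_apply]
      exact Finset.sum_eq_zero fun i _ => Finsupp.single_eq_of_ne (Ne.symm (hx.1 i))
    have h2 : (∑ j, Finsupp.single (w j) (γ j)) x = 0 := by
      rw [Finsupp.finset_sum_apply]
      exact Finset.sum_eq_zero fun j _ => Finsupp.single_eq_of_ne (Ne.symm (hx.2 j))
    rw [hl, Finsupp.sub_apply, h1, h2, sub_zero]
  have htot : Finsupp.linearCombination ℝ (id : H → H) l = 0 := by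
    rw [hl, map_sub]
    simp only [map_sum, Finsupp.linearCombination_single, id_eq]
    rw [← hrep, hγ]
    simp
  have hl0 : l = 0 := (linearIndepOn_iff.mp (linearIndependent_subtype_iff.mp hli)) l hsupp htot
  -- range v ⊆ range w
  have hsub : Set.range v ⊆ Set.range w := by
    rintro x ⟨i, rfl⟩
    by_contra hxw
    simp only [Set.mem_range, not_exists] at hxw
    have h1 : (∑ i', Finsupp.single (v i') (β i')) (v i) = β i := by
      rw [Finsupp.finset_sum_apply]
      rw [Finset.sum_congr rfl (fun i' _ => Finsupp.single_apply)]
      simp only [hv.eq_iff]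
      rw [Finset.sum_ite_eq' Finset.univ i β]
      simp
    have h2 : (∑ j, Finsupp.single (w j) (γ j)) (v i) = 0 := by
      rw [Finsupp.finset_sum_apply]
      exact Finset.sum_eq_zero fun j _ => Finsupp.single_eq_of_ne (fun h => hxw j h.symm)
    have : l (v i) = β i := by rw [hl, Finsupp.sub_apply, h1, h2, sub_zero]
    rw [hl0] at this
    exact hβ i (by simpa using this.symm)
  -- cardinality argument
  have hcard : (Set.range v).ncard = (Set.range w).ncard := by
    rw [← Set.image_univ, ← Set.image_univ, Set.ncard_image_of_injective _ hv,
      Set.ncard_image_of_injective _ hw]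
  exact hne (Set.eq_of_subset_of_ncard_le hsub hcard.ge (Set.finite_range w))
end

section
/- Let $(f_n)$ be a sequence of continuous functions on a compact metric space $\Theta$ converging uniformly to a continuous function $f$, and suppose for integers $p < p^*$ that $\max_{\Theta_{p+1}} f > \max_{\Theta_p} f$ (strict increase below $p^*$) while $\max_{\Theta_{p^*+1}} f = \max_{\Theta_{p^*}} f$, where $\Theta_q$ are compact sets. Fix $\epsilon$ with $0 < \epsilon < \min_{p < p^*}(\max_{\Theta_{p+1}} f - \max_{\Theta_p} f)$ and define $\widehat{p}_n = \min\{p : \max_{\Theta_{p+1}} f_n - \max_{\Theta_p} f_n < \epsilon\}$. Then $\widehat{p}_n = p^*$ for all sufficiently large $n$. -/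
open Filter

lemma sup_image_le_of_le {E : Type*} {S : Set E} (hS : S.Nonempty) {h k : E → ℝ}
    (hb : BddAbove (k '' S)) {δ : ℝ} (hd : ∀ x ∈ S, h x ≤ k x + δ) :
    sSup (h '' S) ≤ sSup (k '' S) + δ := by
  apply csSup_le (hS.image h)
  rintro y ⟨x, hx, rfl⟩
  exact (hd x hx).trans (add_le_add_left (le_csSup hb ⟨x, hx, rfl⟩) δ)

/-- Consistency of the thresholded first-difference rule for selecting the number of
variables: if `fₙ → f` uniformly on a compact metric space, the maxima of `f` over the
compact sets `Θ_q` strictly increase (by more than `ε`) for `q < p*` and stabilize at `p*`,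
then the estimator `p̂ₙ = min{p : max_{Θ_{p+1}} fₙ - max_{Θ_p} fₙ < ε}` equals `p*` for all
sufficiently large `n`. -/
theorem stmt17 {E : Type*} [MetricSpace E] [CompactSpace E]
    (f : ℕ → E → ℝ) (g : E → ℝ)
    (hf : ∀ n, Continuous (f n)) (hg : Continuous g)
    (hunif : TendstoUniformly f g atTop)
    (Θ : ℕ → Set E) (hΘc : ∀ q, IsCompact (Θ q)) (hΘne : ∀ q, (Θ q).Nonempty)
    (pstar : ℕ)
    (hstrict : ∀ p < pstar, sSup (g '' Θ p) < sSup (g '' Θ (p + 1)))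
    (heq : sSup (g '' Θ (pstar + 1)) = sSup (g '' Θ pstar))
    (ε : ℝ) (hε : 0 < ε)
    (hgap : ∀ p < pstar, ε < sSup (g '' Θ (p + 1)) - sSup (g '' Θ p))
    (phat : ℕ → ℕ)
    (hphat : ∀ n, phat n = sInf {p : ℕ | sSup (f n '' Θ (p + 1)) - sSup (f n '' Θ p) < ε}) :
    ∀ᶠ n in atTop, phat n = pstar := by
  -- choose δ
  set T : Finset ℝ :=
    insert (ε / 3) ((Finset.range pstar).image fun p =>
      (sSup (g '' Θ (p + 1)) - sSup (g '' Θ p) - ε) / 2) with hT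
  have hTne : T.Nonempty := ⟨ε / 3, Finset.mem_insert_self _ _⟩
  set δ : ℝ := T.min' hTne with hδdef
  have hδpos : 0 < δ := by
    have hmem : δ ∈ T := T.min'_mem hTne
    rcases Finset.mem_insert.1 hmem with h | h
    · rw [h]; linarith
    · rcases Finset.mem_image.1 h with ⟨p, hp, hpe⟩
      have := hgap p (Finset.mem_range.1 hp)
      rw [← hpe]; linarith
  have hδε : δ ≤ ε / 3 := Finset.min'_le _ _ (Finset.mem_insert_self _ _)
  have hδgap : ∀ p < pstar, 2 * δ ≤ sSup (g '' Θ (p + 1)) - sSup (g '' Θ p) - ε := by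
    intro p hp
    have : δ ≤ (sSup (g '' Θ (p + 1)) - sSup (g '' Θ p) - ε) / 2 :=
      Finset.min'_le _ _ (Finset.mem_insert_of_mem
        (Finset.mem_image.2 ⟨p, Finset.mem_range.2 hp, rfl⟩))
    linarith
  have hev := Metric.tendstoUniformly_iff.1 hunif δ hδpos
  filter_upwards [hev] with n hn
  -- sup bounds
  have hbg : ∀ q, BddAbove (g '' Θ q) := fun q => ((hΘc q).image hg).bddAbove
  have hbf : ∀ q, BddAbove (f n '' Θ q) := fun q => ((hΘc q).image (hf n)).bddAbove
  have hclose : ∀ x, |g x - f n x| ≤ δ := by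
    intro x
    have := hn x
    rw [Real.dist_eq] at this
    exact this.le
  have hup : ∀ q, sSup (f n '' Θ q) ≤ sSup (g '' Θ q) + δ := by
    intro q
    exact sup_image_le_of_le (hΘne q) (hbg q) fun x hx => by
      have := hclose x; rw [abs_le] at this; linarith [this.1]
  have hlo : ∀ q, sSup (g '' Θ q) ≤ sSup (f n '' Θ q) + δ := by
    intro q
    exact sup_image_le_of_le (hΘne q) (hbf q) fun x hx => by
      have := hclose x; rw [abs_le] at this; linarith [this.2]
  rw [hphat n]
  have hmem : pstar ∈ {p : ℕ | sSup (f n '' Θ (p + 1)) - sSup (f n '' Θ p) < ε} := by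
    have h1 := hup (pstar + 1)
    have h2 := hlo pstar
    simp only [Set.mem_setOf_eq]
    linarith [heq]
  have hnot : ∀ p < pstar, p ∉ {p : ℕ | sSup (f n '' Θ (p + 1)) - sSup (f n '' Θ p) < ε} := by
    intro p hp hmem'
    simp only [Set.mem_setOf_eq] at hmem'
    have h1 := hlo (p + 1)
    have h2 := hup p
    have h3 := hδgap p hp
    linarith
  refine le_antisymm (Nat.sInf_le hmem) ?_
  by_contra h
  push_neg at h
  exact hnot _ h (Nat.sInf_mem ⟨pstar, hmem⟩)
end
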